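/- Let K be a compact subset of ℝ of infinite cardinality with cap(K) < 1. Then the Fekete kernel J(K) = { x ∈ K : P(x) = 0 for every polynomial P with integer coefficients satisfying ‖P‖_K < 1 } is a finite set. -/

import Mathlib

open Polynomial Filter

/-- The sup norm of a real polynomial on a set `K ⊆ ℝ`. -/
noncomputable def supNormOn (K : Set ℝ) (P : Polynomial ℝ) : ℝ :=
  sSup ((fun x => |P.eval x|) '' K)

/-- `m_n(K)`: the infimum of sup norms on `K` of monic real polynomials of degree `n`. -/
noncomputable def chebInf (K : Set ℝ) (n : ℕ) : ℝ :=
  sInf (supNormOn K '' {P : Polynomial ℝ | P.Monic ∧ P.natDegree = n})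

section Aux

variable {K : Set ℝ}

lemma supNormOn_bdd (hK : IsCompact K) (P : ℝ[X]) :
    BddAbove ((fun x => |P.eval x|) '' K) :=
  hK.bddAbove_image ((continuous_abs.comp P.continuous).continuousOn)

lemma le_supNormOn (hK : IsCompact K) {x : ℝ} (hx : x ∈ K) (P : ℝ[X]) :
    |P.eval x| ≤ supNormOn K P :=
  le_csSup (supNormOn_bdd hK P) ⟨x, hx, rfl⟩

lemma supNormOn_le (hne : K.Nonempty) {P : ℝ[X]} {a : ℝ}
    (h : ∀ x ∈ K, |P.eval x| ≤ a) : supNormOn K P ≤ a :=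
  csSup_le (hne.image _) (by rintro y ⟨x, hx, rfl⟩; exact h x hx)

lemma supNormOn_nonneg (P : ℝ[X]) : 0 ≤ supNormOn K P :=
  Real.sSup_nonneg (by rintro y ⟨x, hx, rfl⟩; exact abs_nonneg _)

lemma supNormOn_pos (hK : IsCompact K) (hKinf : K.Infinite) {P : ℝ[X]} (hP : P ≠ 0) :
    0 < supNormOn K P := by
  obtain ⟨x, hxK, hxr⟩ := (hKinf.diff (P.finite_setOf_isRoot hP)).nonempty
  have : P.eval x ≠ 0 := hxr
  exact lt_of_lt_of_le (abs_pos.2 this) (le_supNormOn hK hxK P)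

lemma chebInf_nonneg (K : Set ℝ) (n : ℕ) : 0 ≤ chebInf K n :=
  Real.sInf_nonneg (by rintro y ⟨P, hP, rfl⟩; exact supNormOn_nonneg P)

end Aux
open MeasureTheory Module

set_option maxHeartbeats 2000000 in
lemma exists_small_int_poly (K : Set ℝ) (hK : IsCompact K) (hKinf : K.Infinite)
    (c : ℝ) (hc : Tendsto (fun n : ℕ => chebInf K n ^ ((n : ℝ)⁻¹)) atTop (nhds c))
    (hcap : c < 1) :
    ∃ Pz : Polynomial ℤ, Pz ≠ 0 ∧ supNormOn K (Pz.map (Int.castRingHom ℝ)) < 1 := by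
  have hne : K.Nonempty := hKinf.nonempty
  have hc0 : 0 ≤ c := ge_of_tendsto' hc fun n => Real.rpow_nonneg (chebInf_nonneg K n) _
  set θ : ℝ := (c + 1) / 2 with hθdef
  have hθ0 : 0 < θ := by positivity
  have hθ1 : θ < 1 := by simp only [hθdef]; linarith
  have hθc : c < θ := by simp only [hθdef]; linarith
  obtain ⟨n0, hn0⟩ := (hc.eventually_lt_const hθc).exists_forall_of_atTop
  -- near-optimal monic polynomials of each degree
  have hcheb : ∀ n : ℕ, 1 ≤ n → n0 ≤ n → chebInf K n < θ ^ n := by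
    intro n h1 h2
    rcases eq_or_lt_of_le (chebInf_nonneg K n) with h | h
    · rw [← h]; positivity
    · have hn : n ≠ 0 := by omega
      have := hn0 n h2
      calc chebInf K n = (chebInf K n ^ ((n : ℝ)⁻¹)) ^ n :=
            (Real.rpow_inv_natCast_pow (chebInf_nonneg K n) hn).symm
        _ < θ ^ n := by
            exact pow_lt_pow_left₀ this (Real.rpow_nonneg (chebInf_nonneg K n) _) hn
  have hT : ∀ n : ℕ, ∃ P : ℝ[X], P.Monic ∧ P.natDegree = n ∧
      (1 ≤ n → n0 ≤ n → supNormOn K P < θ ^ n) := by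
    intro n
    by_cases hn : 1 ≤ n ∧ n0 ≤ n
    · have hnonempty : (supNormOn K '' {P : ℝ[X] | P.Monic ∧ P.natDegree = n}).Nonempty :=
        ⟨supNormOn K (X ^ n), ⟨X ^ n, ⟨monic_X_pow n, natDegree_X_pow n⟩, rfl⟩⟩
      obtain ⟨y, ⟨P, ⟨hPm, hPd⟩, rfl⟩, hy⟩ :=
        exists_lt_of_csInf_lt hnonempty (hcheb n hn.1 hn.2)
      exact ⟨P, hPm, hPd, fun _ _ => hy⟩
    · refine ⟨X ^ n, monic_X_pow n, natDegree_X_pow n, fun h1 h2 => absurd ⟨h1, h2⟩ hn⟩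
  choose T hTm hTd hTs using hT
  set t : ℕ → ℝ := fun n => supNormOn K (T n) with ht
  have htpos : ∀ n, 0 < t n := fun n => supNormOn_pos hK hKinf (hTm n).ne_zero
  -- uniform bound t i ≤ C θ^i
  set C : ℝ := 1 + ∑ i ∈ Finset.range (n0 + 1), t i * θ ^ (-(i : ℤ)) with hCdef
  have hsum_nonneg : ∀ i ∈ Finset.range (n0 + 1), 0 ≤ t i * θ ^ (-(i : ℤ)) := by
    intro i _
    have := htpos i
    positivity
  have hC1 : 1 ≤ C := by
    have := Finset.sum_nonneg hsum_nonneg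
    simp only [hCdef]; linarith
  have hC0 : 0 < C := lt_of_lt_of_le one_pos hC1
  have hCt : ∀ i, t i ≤ C * θ ^ i := by
    intro i
    by_cases hi : i < n0 + 1
    · have hle : t i * θ ^ (-(i : ℤ)) ≤ C := by
        have := Finset.single_le_sum hsum_nonneg (Finset.mem_range.mpr hi)
        simp only [hCdef]; linarith
      have : t i * θ ^ (-(i : ℤ)) * θ ^ i ≤ C * θ ^ i :=
        mul_le_mul_of_nonneg_right hle (by positivity)
      calc t i = t i * θ ^ (-(i : ℤ)) * θ ^ i := by
            rw [mul_assoc, ← zpow_natCast θ i, ← zpow_add₀ hθ0.ne', neg_add_cancel, zpow_zero,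
              mul_one]
        _ ≤ C * θ ^ i := this
    · have h1 : 1 ≤ i := by omega
      have h2 : n0 ≤ i := by omega
      have := (hTs i h1 h2).le
      calc t i ≤ θ ^ i := this
        _ ≤ C * θ ^ i := le_mul_of_one_le_left (by positivity) hC1
  -- choose the dimension m
  set ρ : ℝ := Real.sqrt θ with hρdef
  have hρ0 : 0 < ρ := Real.sqrt_pos.mpr hθ0
  have hρ1 : ρ < 1 := by
    rw [hρdef, show (1:ℝ) = Real.sqrt 1 by simp]
    exact Real.sqrt_lt_sqrt hθ0.le hθ1
  have hρsq : ρ ^ 2 = θ := Real.sq_sqrt hθ0.le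
  have t1 : Tendsto (fun n : ℕ => (n : ℝ) * ρ ^ n) atTop (nhds 0) := by
    have := (summable_pow_mul_geometric_of_norm_lt_one 1
      (r := ρ) (by rwa [Real.norm_eq_abs, abs_of_pos hρ0])).tendsto_atTop_zero
    simpa using this
  have t2 : Tendsto (fun n : ℕ => ρ ^ n) atTop (nhds 0) :=
    tendsto_pow_atTop_nhds_zero_of_lt_one hρ0.le hρ1
  have t3 : Tendsto (fun n : ℕ => 2 * C * ((n : ℝ) * ρ ^ n + ρ ^ n)) atTop (nhds 0) := by
    have := (t1.add t2).const_mul (2 * C)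
    simpa using this
  obtain ⟨m', hm'n0, hm'⟩ : ∃ m' : ℕ, n0 ≤ m' ∧ 2 * C * ((m' : ℝ) * ρ ^ m' + ρ ^ m') < 1 := by
    obtain ⟨m', h1, h2⟩ := ((t3.eventually_lt_const one_pos).and (eventually_ge_atTop n0)).exists
    exact ⟨m', h2, h1⟩
  set m : ℕ := m' + 1 with hmdef
  have hm0 : m ≠ 0 := by omega
  have hkey : (m : ℝ) * C * ρ ^ m' < 2⁻¹ := by
    have hcast : (m : ℝ) = (m' : ℝ) + 1 := by push_cast [hmdef]; ring
    rw [hcast]; nlinarith [hm', pow_pos hρ0 m', hC0]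
  -- the product estimate
  have hprod : ∏ i ∈ Finset.range m, ((m : ℝ) * t i) < 2⁻¹ ^ m := by
    have hstep : ∏ i ∈ Finset.range m, ((m : ℝ) * t i)
        ≤ ∏ i ∈ Finset.range m, ((m : ℝ) * C * θ ^ i) := by
      refine Finset.prod_le_prod (fun i _ => ?_) (fun i _ => ?_)
      · have := (htpos i).le
        positivity
      · have := hCt i
        have hm1 : (1 : ℝ) ≤ (m : ℝ) := by exact_mod_cast Nat.one_le_iff_ne_zero.mpr hm0
        nlinarith [htpos i, pow_pos hθ0 i]
    have h2S : (∑ i ∈ Finset.range m, i) * 2 = m' * m := by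
      rw [Finset.sum_range_id_mul_two m, hmdef, Nat.add_sub_cancel, Nat.mul_comm]
    have hθpow : θ ^ (∑ i ∈ Finset.range m, i) = (ρ ^ m') ^ m := by
      rw [← hρsq, ← pow_mul, ← pow_mul, Nat.mul_comm 2, h2S]
    have heq : ∏ i ∈ Finset.range m, ((m : ℝ) * C * θ ^ i)
        = ((m : ℝ) * C * ρ ^ m') ^ m := by
      rw [Finset.prod_mul_distrib, Finset.prod_const, Finset.card_range,
        Finset.prod_pow_eq_pow_sum, hθpow]
      exact (mul_pow ((m : ℝ) * C) (ρ ^ m') m).symm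
    calc ∏ i ∈ Finset.range m, ((m : ℝ) * t i) ≤ ((m : ℝ) * C * ρ ^ m') ^ m := by
          rw [← heq]; exact hstep
      _ < 2⁻¹ ^ m := by
          refine pow_lt_pow_left₀ hkey ?_ hm0
          have := (htpos 0).le
          positivity
  -- Minkowski setup
  classical
  set b := Pi.basisFun ℝ (Fin m) with hbdef
  set A : Matrix (Fin m) (Fin m) ℝ := fun i j => (T j).coeff i with hAdef
  have hdetA : A.det = 1 := by
    rw [Matrix.det_of_upperTriangular]
    · apply Finset.prod_eq_one
      intro i _
      have := (hTm (i : ℕ)).coeff_natDegree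
      rw [hTd] at this
      simpa [hAdef] using this
    · intro i j hij
      have : (T (j : ℕ)).natDegree < (i : ℕ) := by rw [hTd]; exact_mod_cast hij
      simpa [hAdef] using coeff_eq_zero_of_natDegree_lt this
  set U : (Fin m → ℝ) →ₗ[ℝ] (Fin m → ℝ) := Matrix.toLin' A with hUdef
  have hdetU : LinearMap.det U = 1 := by rw [hUdef, LinearMap.det_toLin', hdetA]
  set r : Fin m → ℝ := fun i => (2 * m * t i)⁻¹ with hrdef
  have hrpos : ∀ i, 0 < r i := by
    intro i
    have := htpos (i : ℕ)
    have hm1 : (0:ℝ) < m := by exact_mod_cast Nat.pos_of_ne_zero hm0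
    simp only [hrdef]
    positivity
  set box : Set (Fin m → ℝ) := Set.pi Set.univ (fun i => Set.Icc (-(r i)) (r i)) with hboxdef
  set body : Set (Fin m → ℝ) := U '' box with hbodydef
  -- volumes
  have hvol_box : volume box = ∏ i : Fin m, ENNReal.ofReal (2 * r i) := by
    rw [hboxdef, volume_pi_pi]
    congr 1
    funext i
    rw [Real.volume_Icc]
    congr 1
    ring
  have hvol_body : volume body = ∏ i : Fin m, ENNReal.ofReal (2 * r i) := by
    rw [hbodydef, Measure.addHaar_image_linearMap, hdetU, ← hvol_box]
    simp
  have hfund : volume (ZSpan.fundamentalDomain b) = 1 := by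
    rw [hbdef, ZSpan.fundamentalDomain_pi_basisFun, volume_pi_pi]
    simp [Real.volume_Ico]
  -- the measure inequality
  have hineq : volume (ZSpan.fundamentalDomain b) * 2 ^ finrank ℝ (Fin m → ℝ) < volume body := by
    rw [hfund, one_mul, hvol_body]
    have hfr : finrank ℝ (Fin m → ℝ) = m := by
      rw [finrank_pi]
      exact Fintype.card_fin m
    rw [hfr]
    -- real side
    have hr2 : ∀ i : Fin m, 2 * r i = ((m : ℝ) * t (i : ℕ))⁻¹ := by
      intro i
      simp only [hrdef]
      rw [show (2 : ℝ) * (m : ℝ) * t (i : ℕ) = 2 * ((m : ℝ) * t (i : ℕ)) by ring, mul_inv]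
      ring
    have hprodpos : (0:ℝ) < ∏ i ∈ Finset.range m, ((m : ℝ) * t i) := by
      apply Finset.prod_pos
      intro i _
      have := htpos i
      have hm1 : (0:ℝ) < m := by exact_mod_cast Nat.pos_of_ne_zero hm0
      positivity
    have hreal : (2:ℝ) ^ m < ∏ i : Fin m, (2 * r i) := by
      have h1 : ∏ i : Fin m, (2 * r i) = (∏ i ∈ Finset.range m, ((m : ℝ) * t i))⁻¹ := by
        rw [← Finset.prod_inv_distrib, ← Fin.prod_univ_eq_prod_range fun i => ((m:ℝ) * t i)⁻¹]
        exact Finset.prod_congr rfl fun i _ => hr2 i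
      rw [h1]
      have h2 : ((2:ℝ)⁻¹ ^ m)⁻¹ = 2 ^ m := by simp
      rw [← h2]
      exact inv_strictAnti₀ hprodpos hprod
    calc (2 : ENNReal) ^ m = ENNReal.ofReal ((2:ℝ) ^ m) := by
          rw [ENNReal.ofReal_pow (by norm_num : (0:ℝ) ≤ 2)]
          norm_num
      _ < ENNReal.ofReal (∏ i : Fin m, (2 * r i)) :=
          (ENNReal.ofReal_lt_ofReal_iff (lt_trans (by positivity) hreal)).mpr hreal
      _ = ∏ i : Fin m, ENNReal.ofReal (2 * r i) := by
          rw [ENNReal.ofReal_prod_of_nonneg]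
          intro i _
          have := (hrpos i).le
          positivity
  -- symmetry and convexity
  have hsymm : ∀ x ∈ body, -x ∈ body := by
    rintro x ⟨cv, hcv, rfl⟩
    refine ⟨-cv, ?_, (map_neg U cv)⟩
    intro i _
    have := hcv i (Set.mem_univ i)
    simp only [Set.mem_Icc] at this ⊢
    constructor <;> simp <;> linarith [this.1, this.2]
  have hconv : Convex ℝ body :=
    (convex_pi fun i _ => convex_Icc _ _).linear_image U
  -- apply Minkowski
  haveI : Countable ((Submodule.span ℤ (Set.range ⇑b)).toAddSubgroup) :=
    inferInstanceAs (Countable (Submodule.span ℤ (Set.range ⇑b)))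
  obtain ⟨x, hx0, hxmem⟩ :=
    exists_ne_zero_mem_lattice_of_measure_mul_two_pow_lt_measure
      (ZSpan.isAddFundamentalDomain' b volume) hsymm hconv hineq
  -- extract the integer polynomial
  obtain ⟨cv, hcv, hUc⟩ := hxmem
  have hmR : (m : ℝ) ≠ 0 := by exact_mod_cast hm0
  have hxspan : (x : Fin m → ℝ) ∈ Submodule.span ℤ (Set.range ⇑b) := x.2
  have hint : ∀ i, ∃ z : ℤ, (z : ℝ) = (x : Fin m → ℝ) i := by
    have hrepr := (Basis.mem_span_iff_repr_mem ℤ b _).mp hxspan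
    intro i
    obtain ⟨z, hz⟩ := hrepr i
    refine ⟨z, ?_⟩
    simpa [hbdef, Pi.basisFun_repr] using hz
  choose f hf using hint
  have hUapp : ∀ (v : Fin m → ℝ) (j : Fin m),
      U v j = ∑ i : Fin m, (T (i : ℕ)).coeff (j : ℕ) * v i := by
    intro v j
    simp [hUdef, Matrix.toLin'_apply, Matrix.mulVec, dotProduct, hAdef]
    rfl
  set Preal : ℝ[X] := ∑ i : Fin m, Polynomial.C (cv i) * T (i : ℕ) with hPrealdef
  have hcoeffP : ∀ k : ℕ, Preal.coeff k
      = if hk : k < m then (x : Fin m → ℝ) ⟨k, hk⟩ else 0 := by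
    intro k
    rw [hPrealdef, Polynomial.finset_sum_coeff]
    by_cases hk : k < m
    · rw [dif_pos hk]
      have hxk : (x : Fin m → ℝ) ⟨k, hk⟩ = U cv ⟨k, hk⟩ := by rw [hUc]
      rw [hxk, hUapp]
      exact Finset.sum_congr rfl fun i _ => by
        rw [Polynomial.coeff_C_mul, mul_comm]
    · rw [dif_neg hk]
      apply Finset.sum_eq_zero
      intro i _
      have hlt : (T (i : ℕ)).natDegree < k := by
        rw [hTd]
        exact lt_of_lt_of_le i.isLt (le_of_not_gt hk)
      rw [Polynomial.coeff_C_mul, coeff_eq_zero_of_natDegree_lt hlt, mul_zero]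
  have hPnorm : supNormOn K Preal < 1 := by
    have hle : supNormOn K Preal ≤ 2⁻¹ := by
      apply supNormOn_le hne
      intro y hy
      have heval : Preal.eval y = ∑ i : Fin m, cv i * (T (i : ℕ)).eval y := by
        simp [hPrealdef, Polynomial.eval_finset_sum]
      rw [heval]
      calc |∑ i : Fin m, cv i * (T (i : ℕ)).eval y|
          ≤ ∑ i : Fin m, |cv i * (T (i : ℕ)).eval y| := Finset.abs_sum_le_sum_abs _ _
        _ ≤ ∑ _i : Fin m, (2 * (m : ℝ))⁻¹ := by
            apply Finset.sum_le_sum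
            intro i _
            rw [abs_mul]
            have h1 : |cv i| ≤ r i := by
              have hmem := hcv i (Set.mem_univ i)
              rw [Set.mem_Icc] at hmem
              exact abs_le.mpr ⟨hmem.1, hmem.2⟩
            have h2 : |(T (i : ℕ)).eval y| ≤ t (i : ℕ) := le_supNormOn hK hy _
            calc |cv i| * |(T (i : ℕ)).eval y| ≤ r i * t (i : ℕ) :=
                  mul_le_mul h1 h2 (abs_nonneg _) (hrpos i).le
              _ = (2 * (m : ℝ))⁻¹ := by
                  simp only [hrdef]
                  rw [show (2 : ℝ) * (m : ℝ) * t (i : ℕ) = (2 * (m : ℝ)) * t (i : ℕ) by ring,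
                    mul_inv, mul_assoc, inv_mul_cancel₀ (htpos (i : ℕ)).ne', mul_one]
        _ = 2⁻¹ := by
            rw [Finset.sum_const, Finset.card_univ, Fintype.card_fin, nsmul_eq_mul,
              mul_inv, ← mul_assoc, mul_comm (m : ℝ) 2⁻¹, mul_assoc,
              mul_inv_cancel₀ hmR, mul_one]
    linarith
  set Pz : Polynomial ℤ := ∑ i : Fin m, Polynomial.C (f i) * X ^ (i : ℕ) with hPzdef
  have hPzcoeff : ∀ k : ℕ, Pz.coeff k = if hk : k < m then f ⟨k, hk⟩ else 0 := by
    intro k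
    rw [hPzdef, Polynomial.finset_sum_coeff]
    by_cases hk : k < m
    · rw [dif_pos hk]
      rw [Finset.sum_eq_single (⟨k, hk⟩ : Fin m)]
      · simp [Polynomial.coeff_C_mul, Polynomial.coeff_X_pow]
      · intro i _ hne'
        have : k ≠ (i : ℕ) := fun h => hne' (by ext; simp [← h])
        simp [Polynomial.coeff_C_mul, Polynomial.coeff_X_pow, this]
      · intro h
        exact absurd (Finset.mem_univ _) h
    · rw [dif_neg hk]
      apply Finset.sum_eq_zero
      intro i _
      have : k ≠ (i : ℕ) := by
        have := i.isLt
        omega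
      simp [Polynomial.coeff_C_mul, Polynomial.coeff_X_pow, this]
  have hmap : Pz.map (Int.castRingHom ℝ) = Preal := by
    apply Polynomial.ext
    intro k
    rw [Polynomial.coeff_map, hPzcoeff k, hcoeffP k]
    by_cases hk : k < m
    · rw [dif_pos hk, dif_pos hk]
      simpa using hf ⟨k, hk⟩
    · rw [dif_neg hk, dif_neg hk]
      simp
  have hPz0 : Pz ≠ 0 := by
    intro h
    apply hx0
    have hP0 : Preal = 0 := by rw [← hmap, h, Polynomial.map_zero]
    have hx : (x : Fin m → ℝ) = 0 := by
      funext j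
      have hj := hcoeffP (j : ℕ)
      rw [hP0, dif_pos j.isLt] at hj
      simpa using hj.symm
    exact (ZeroMemClass.coe_eq_zero).mp hx
  exact ⟨Pz, hPz0, by rw [hmap]; exact hPnorm⟩

/-- The Fekete kernel `J(K)`: points of `K` killed by every integer polynomial of sup norm
`< 1` on `K`. -/
def feketeKernel (K : Set ℝ) : Set ℝ :=
  {x | x ∈ K ∧ ∀ P : Polynomial ℤ,
    supNormOn K (P.map (Int.castRingHom ℝ)) < 1 → Polynomial.aeval x P = 0}

/-- If `cap(K) < 1`, the Fekete kernel `J(K)` is finite. -/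
theorem feketeKernel_finite (K : Set ℝ) (hK : IsCompact K) (hKinf : K.Infinite)
    (c : ℝ) (hc : Tendsto (fun n : ℕ => chebInf K n ^ ((n : ℝ)⁻¹)) atTop (nhds c))
    (hcap : c < 1) :
    (feketeKernel K).Finite := by
  obtain ⟨Pz, hPz0, hPznorm⟩ := exists_small_int_poly K hK hKinf c hc hcap
  have hPreal0 : Pz.map (Int.castRingHom ℝ) ≠ 0 :=
    (Polynomial.map_ne_zero_iff (Int.cast_injective)).mpr hPz0
  refine ((Pz.map (Int.castRingHom ℝ)).finite_setOf_isRoot hPreal0).subset ?_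
  rintro y ⟨hyK, hy⟩
  have h0 : Polynomial.aeval y Pz = 0 := hy Pz hPznorm
  show (Pz.map (Int.castRingHom ℝ)).eval y = 0
  rw [Polynomial.eval_map, show (Int.castRingHom ℝ) = algebraMap ℤ ℝ from rfl,
    ← Polynomial.aeval_def]
  exact h0
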